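/- Let m, n ≥ 1, let Z = (Z_a, Z_b) be a random vector in ℝ^m × ℝ^n whose m + n coordinates are independent standard normal random variables, let c ≥ 0 and C = {(x, y) ∈ ℝ^m × ℝ^n : ‖x‖ ≥ c‖y‖}. Then for every ε ≥ 0, ℙ(Z ∈ Tube(C, ε)) = ℙ(‖Z_a‖ ≥ c‖Z_b‖ − ε√(1 + c²)). -/

import Mathlib

open MeasureTheory

private lemma cs_aux (c A B : ℝ) (hc : 0 ≤ c) (hA : 0 ≤ A) (hB : 0 ≤ B) :
    A + c * B ≤ Real.sqrt (1 + c ^ 2) * Real.sqrt (A ^ 2 + B ^ 2) := by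
  rw [← Real.sqrt_mul (by positivity)]
  refine Real.le_sqrt_of_sq_le ?_
  nlinarith [sq_nonneg (c * A - B)]

/-- the exact tube probability for the F-statistic rejection
cone.  Let `Z = (Z_a, Z_b)` be a random vector in `ℝ^m × ℝ^n` (Euclidean norm)
whose `m + n` coordinates are independent standard normals, let `c ≥ 0` and
`C = {(x,y) : ‖x‖ ≥ c‖y‖}`.  Then for every `ε ≥ 0`,
`ℙ(Z ∈ Tube(C, ε)) = ℙ(‖Z_a‖ ≥ c‖Z_b‖ − ε√(1+c²))`. -/
theorem tube_probability_of_F_rejection_cone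
    (m n : ℕ) (hm : 1 ≤ m) (hn : 1 ≤ n) (c : ℝ) (hc : 0 ≤ c)
    [mW : MeasurableSpace (WithLp 2 (EuclideanSpace ℝ (Fin m) × EuclideanSpace ℝ (Fin n)))]
    [BorelSpace (WithLp 2 (EuclideanSpace ℝ (Fin m) × EuclideanSpace ℝ (Fin n)))]
    (μ : Measure (WithLp 2 (EuclideanSpace ℝ (Fin m) × EuclideanSpace ℝ (Fin n))))
    (hμ : μ = ((Measure.pi fun _ : Fin m => ProbabilityTheory.gaussianReal 0 1).prod
        (Measure.pi fun _ : Fin n => ProbabilityTheory.gaussianReal 0 1)).map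
        (fun z : (Fin m → ℝ) × (Fin n → ℝ) =>
          (WithLp.equiv 2 (EuclideanSpace ℝ (Fin m) × EuclideanSpace ℝ (Fin n))).symm
            ((EuclideanSpace.equiv (Fin m) ℝ).symm z.1,
             (EuclideanSpace.equiv (Fin n) ℝ).symm z.2)))
    (C : Set (WithLp 2 (EuclideanSpace ℝ (Fin m) × EuclideanSpace ℝ (Fin n))))
    (hC : C = {z : WithLp 2 (EuclideanSpace ℝ (Fin m) × EuclideanSpace ℝ (Fin n)) |
      c * ‖(WithLp.equiv 2 _ z).2‖ ≤ ‖(WithLp.equiv 2 _ z).1‖})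
    (ε : ℝ) (hε : 0 ≤ ε) :
    μ {z : WithLp 2 (EuclideanSpace ℝ (Fin m) × EuclideanSpace ℝ (Fin n)) |
        Metric.infDist z C ≤ ε}
      = μ {z : WithLp 2 (EuclideanSpace ℝ (Fin m) × EuclideanSpace ℝ (Fin n)) |
        c * ‖(WithLp.equiv 2 _ z).2‖ - ε * Real.sqrt (1 + c ^ 2)
          ≤ ‖(WithLp.equiv 2 _ z).1‖} := by
  have hs : (0:ℝ) < Real.sqrt (1 + c ^ 2) := Real.sqrt_pos.2 (by positivity)
  set s : ℝ := Real.sqrt (1 + c ^ 2) with hs_def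
  have hs2 : s ^ 2 = 1 + c ^ 2 := Real.sq_sqrt (by positivity)
  clear_value s
  have hCne : C.Nonempty := by
    refine ⟨0, ?_⟩
    rw [hC]
    simp
  congr 1
  ext z
  simp only [Set.mem_setOf_eq]
  constructor
  · -- forward: tube ⊆ shifted halfspace
    intro h
    by_contra hcon
    push_neg at hcon
    have hgap : 0 < (c * ‖(WithLp.equiv 2 _ z).2‖ - ‖(WithLp.equiv 2 _ z).1‖ - ε * s) / s :=
      div_pos (by linarith) hs
    have hεlt : Metric.infDist z C <
        ε + (c * ‖(WithLp.equiv 2 _ z).2‖ - ‖(WithLp.equiv 2 _ z).1‖ - ε * s) / s := by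
      linarith
    obtain ⟨w, hwC, hwd⟩ := (Metric.infDist_lt_iff hCne).1 hεlt
    rw [hC, Set.mem_setOf_eq] at hwC
    have hd : dist z w = Real.sqrt (dist z.fst w.fst ^ 2 + dist z.snd w.snd ^ 2) :=
      WithLp.prod_dist_eq_of_L2 z w
    have h1 : c * ‖(WithLp.equiv 2 _ z).2‖ - ‖(WithLp.equiv 2 _ z).1‖
        ≤ dist z.fst w.fst + c * dist z.snd w.snd := by
      have t1 : ‖(WithLp.equiv 2 _ z).2‖ ≤ ‖(WithLp.equiv 2 _ w).2‖ + dist z.snd w.snd := by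
        have h' := norm_sub_norm_le ((WithLp.equiv 2 _ z).2) ((WithLp.equiv 2 _ w).2)
        have hdd : dist z.snd w.snd = ‖(WithLp.equiv 2 _ z).2 - (WithLp.equiv 2 _ w).2‖ := by
          rw [dist_eq_norm]; rfl
        linarith [h'.trans_eq hdd.symm]
      have t2 : ‖(WithLp.equiv 2 _ w).1‖ ≤ ‖(WithLp.equiv 2 _ z).1‖ + dist z.fst w.fst := by
        have h' := norm_sub_norm_le ((WithLp.equiv 2 _ w).1) ((WithLp.equiv 2 _ z).1)
        have hdd : dist z.fst w.fst = ‖(WithLp.equiv 2 _ w).1 - (WithLp.equiv 2 _ z).1‖ := by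
          rw [dist_eq_norm, norm_sub_rev]; rfl
        linarith [h'.trans_eq hdd.symm]
      nlinarith [hwC]
    have h2 : dist z.fst w.fst + c * dist z.snd w.snd ≤ s * dist z w := by
      rw [hd, hs_def]
      exact cs_aux c _ _ hc dist_nonneg dist_nonneg
    have h3 : c * ‖(WithLp.equiv 2 _ z).2‖ - ‖(WithLp.equiv 2 _ z).1‖ ≤ s * dist z w :=
      le_trans h1 h2
    have h4 : s * dist z w
        < s * ε + (c * ‖(WithLp.equiv 2 _ z).2‖ - ‖(WithLp.equiv 2 _ z).1‖ - ε * s) := by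
      have h' := mul_lt_mul_of_pos_left hwd hs
      rw [mul_add, mul_div_cancel₀ _ (ne_of_gt hs)] at h'
      exact h'
    linarith
  · -- backward: construct a nearby point of C
    intro h
    by_cases hin : c * ‖(WithLp.equiv 2 _ z).2‖ ≤ ‖(WithLp.equiv 2 _ z).1‖
    · have : z ∈ C := by rw [hC]; exact hin
      calc Metric.infDist z C = 0 := Metric.infDist_zero_of_mem this
      _ ≤ ε := hε
    · push_neg at hin
      set x : EuclideanSpace ℝ (Fin m) := (WithLp.equiv 2 _ z).1 with hx_def
      set y : EuclideanSpace ℝ (Fin n) := (WithLp.equiv 2 _ z).2 with hy_def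
      have hxnn : 0 ≤ ‖x‖ := norm_nonneg _
      have hynorm : 0 < ‖y‖ := by
        by_contra hy0
        push_neg at hy0
        have : ‖y‖ = 0 := le_antisymm hy0 (norm_nonneg _)
        rw [this] at hin
        simp at hin
        linarith
      set t : ℝ := (c * ‖y‖ - ‖x‖) / (1 + c ^ 2) with ht_def
      clear_value t
      have htpos : 0 < t := by rw [ht_def]; exact div_pos (by linarith) (by positivity)
      have h1c : t * (1 + c ^ 2) = c * ‖y‖ - ‖x‖ := by
        rw [ht_def, div_mul_cancel₀ _ (by positivity : (1:ℝ) + c ^ 2 ≠ 0)]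
      have htc : t * c ≤ ‖y‖ := by
        nlinarith [sq_nonneg c, norm_nonneg x]
      obtain ⟨u, hu, hxu⟩ : ∃ u : EuclideanSpace ℝ (Fin m), ‖u‖ = 1 ∧ x = ‖x‖ • u := by
        by_cases hx0 : x = 0
        · exact ⟨EuclideanSpace.single ⟨0, hm⟩ 1, by simp, by simp [hx0]⟩
        · refine ⟨‖x‖⁻¹ • x, ?_, ?_⟩
          · rw [norm_smul, norm_inv, norm_norm,
              inv_mul_cancel₀ (norm_ne_zero_iff.2 hx0)]
          · rw [smul_smul, mul_inv_cancel₀ (norm_ne_zero_iff.2 hx0), one_smul]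
      set w : WithLp 2 (EuclideanSpace ℝ (Fin m) × EuclideanSpace ℝ (Fin n)) :=
        (WithLp.equiv 2 _).symm ((‖x‖ + t) • u, ((‖y‖ - t * c) / ‖y‖) • y) with hw_def
      have hw1 : (WithLp.equiv 2 _ w).1 = (‖x‖ + t) • u := rfl
      have hw2 : (WithLp.equiv 2 _ w).2 = ((‖y‖ - t * c) / ‖y‖) • y := rfl
      have hnw1 : ‖(WithLp.equiv 2 _ w).1‖ = ‖x‖ + t := by
        rw [hw1, norm_smul, hu, mul_one, Real.norm_eq_abs, abs_of_nonneg (by linarith)]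
      have hnw2 : ‖(WithLp.equiv 2 _ w).2‖ = ‖y‖ - t * c := by
        rw [hw2, norm_smul, Real.norm_eq_abs,
          abs_of_nonneg (div_nonneg (by linarith) hynorm.le)]
        field_simp
      have hwC : w ∈ C := by
        rw [hC, Set.mem_setOf_eq, hnw2, hnw1]
        have heq : c * (‖y‖ - t * c) = ‖x‖ + t := by linear_combination -h1c
        linarith
      have hd1 : dist z.fst w.fst = t := by
        rw [dist_eq_norm]
        have hsub : z.fst - w.fst = (-t) • u := by
          show x - (‖x‖ + t) • u = (-t) • u
          calc x - (‖x‖ + t) • u = ‖x‖ • u - (‖x‖ + t) • u := by nth_rewrite 1 [hxu]; rfl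
          _ = (‖x‖ - (‖x‖ + t)) • u := (sub_smul _ _ _).symm
          _ = (-t) • u := by congr 1; ring
        rw [hsub, norm_smul, hu, mul_one, Real.norm_eq_abs, abs_neg,
          abs_of_nonneg htpos.le]
      have hd2 : dist z.snd w.snd = t * c := by
        rw [dist_eq_norm]
        have hsub : z.snd - w.snd = (t * c / ‖y‖) • y := by
          show y - ((‖y‖ - t * c) / ‖y‖) • y = (t * c / ‖y‖) • y
          nth_rewrite 1 [← one_smul ℝ y]
          rw [← sub_smul]
          congr 1
          field_simp
          ring
        rw [hsub, norm_smul, Real.norm_eq_abs,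
          abs_of_nonneg (div_nonneg (by positivity) hynorm.le)]
        field_simp
      have hdzw : dist z w = t * s := by
        rw [WithLp.prod_dist_eq_of_L2, hd1, hd2,
          show t ^ 2 + (t * c) ^ 2 = t ^ 2 * (1 + c ^ 2) from by ring,
          Real.sqrt_mul (by positivity), Real.sqrt_sq htpos.le, ← hs_def]
      have hts : t * s ≤ ε := by
        have h2 : t * s * s ≤ ε * s := by
          have h' : t * s * s = t * (1 + c ^ 2) := by rw [mul_assoc, ← pow_two, hs2]
          rw [h', h1c]
          linarith [h]
        exact le_of_mul_le_mul_right (by linarith [h2]) hs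
      calc Metric.infDist z C ≤ dist z w := Metric.infDist_le_dist_of_mem hwC
      _ = t * s := hdzw
      _ ≤ ε := hts
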